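/- arXiv:2601.13483 — 3 statements merged into one kernel-verified Lean document; each statement's English description precedes it below -/
import Mathlib

section
/- For every integer r ≥ 2, the poset P_{𝓛×[r]} is pure if and only if P_𝓛 is pure and the rank of P_𝓛 equals r − 2. -/
namespace LadderPaper

/-- The tuple `a_{i,j}`: entry `t` is `u t` for `t < i` and `max (j + (t - i)) (u t)` for
`t ≥ i` (indices `t ∈ [1,n]`; entries outside `[1,n]` are set to `0`). -/
def atuple (u : ℕ → ℤ) (n i : ℕ) (j : ℤ) : ℕ → ℤ := fun t =>
  if 1 ≤ t ∧ t ≤ n then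
    (if t < i then u t else max (j + ((t : ℤ) - (i : ℤ))) (u t))
  else 0

/-- The tuple `b_{i,j}`: like `a_{i,j}` but with `i`-th entry `j - 1`. -/
def btuple (u : ℕ → ℤ) (n i : ℕ) (j : ℤ) : ℕ → ℤ := fun t =>
  if 1 ≤ t ∧ t ≤ n then
    (if t < i then u t
     else if t = i then j - 1
     else max (j + ((t : ℤ) - (i : ℤ))) (u t))
  else 0

/-- The tuple `(u_1, …, u_n)`. -/
def utuple (u : ℕ → ℤ) (n : ℕ) : ℕ → ℤ := fun t =>
  if 1 ≤ t ∧ t ≤ n then u t else 0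

/-- The lattice `𝓛` of tuples `c` with `u t ≤ c t ≤ v t` for `t ∈ [1,n]`, strictly
increasing entries, and (normalization) `c t = 0` outside `[1,n]`.  It carries the
componentwise (induced product) order. -/
def ladderL (n : ℕ) (u v : ℕ → ℤ) : Set (ℕ → ℤ) :=
  {c | (∀ t, 1 ≤ t → t ≤ n → u t ≤ c t ∧ c t ≤ v t) ∧
       (∀ t, 1 ≤ t → t + 1 ≤ n → c t < c (t + 1)) ∧
       (∀ t, t = 0 ∨ n < t → c t = 0)}

/-- The set `P_𝓛 = { a_{i,j} : i ∈ [n], j ∈ [u_i + 1, v_i] }`. -/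
def PL (n : ℕ) (u v : ℕ → ℤ) : Set (ℕ → ℤ) :=
  {x | ∃ i : ℕ, ∃ j : ℤ, 1 ≤ i ∧ i ≤ n ∧ u i + 1 ≤ j ∧ j ≤ v i ∧ x = atuple u n i j}

/-- The product poset `𝓛 × [r]`. -/
def ladderLr (n : ℕ) (u v : ℕ → ℤ) (r : ℤ) : Set ((ℕ → ℤ) × ℤ) :=
  {p | p.1 ∈ ladderL n u v ∧ 1 ≤ p.2 ∧ p.2 ≤ r}

/-- The set `P_{𝓛×[r]} = { (a_{i,j}, 1) } ∪ { ((u_1,…,u_n), k) : k ∈ [2,r] }`. -/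
def PLr (n : ℕ) (u v : ℕ → ℤ) (r : ℤ) : Set ((ℕ → ℤ) × ℤ) :=
  {p | (p.1 ∈ PL n u v ∧ p.2 = 1) ∨ (p.1 = utuple u n ∧ 2 ≤ p.2 ∧ p.2 ≤ r)}

/-- `ε_i > 1`, with the convention `ε_n > 1` (i.e. `i = n` or `u_{i+1} - u_i > 1`). -/
def epsGt1 (u : ℕ → ℤ) (n i : ℕ) : Prop := i = n ∨ 1 < u (i + 1) - u i

/-- `θ_{i-1} > 1`, with the convention `θ_0 > 1` (i.e. `i = 1` or `v_i - v_{i-1} > 1`). -/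
def thetaGt1 (v : ℕ → ℤ) (i : ℕ) : Prop := i = 1 ∨ 1 < v i - v (i - 1)

/-- Membership in `C = { i ∈ [n-1] : v_i < u_{i+1} } ∪ { n }`. -/
def inC (n : ℕ) (u v : ℕ → ℤ) (i : ℕ) : Prop :=
  (1 ≤ i ∧ i + 1 ≤ n ∧ v i < u (i + 1)) ∨ i = n

/-- The set `C = { i ∈ [n-1] : v_i < u_{i+1} } ∪ { n }`. -/
def Cset (n : ℕ) (u v : ℕ → ℤ) : Set ℕ :=
  {i | 1 ≤ i ∧ i + 1 ≤ n ∧ v i < u (i + 1)} ∪ {n}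

/-- `[p,q]` is one of the blocks `[p_s, q_s]` determined by `C`: `q ∈ C`,
no element of `C` lies in `[p, q-1]`, and either `p = 1` or `p - 1 ∈ C`. -/
def IsBlock (n : ℕ) (u v : ℕ → ℤ) (p q : ℕ) : Prop :=
  1 ≤ p ∧ p ≤ q ∧ q ≤ n ∧ inC n u v q ∧
    (∀ j, p ≤ j → j < q → ¬ inC n u v j) ∧ (p = 1 ∨ inC n u v (p - 1))

/-- `i0 = min { i ∈ [p,q] : ε_i > 1 }` (with the convention `ε_n > 1`). -/
def IsBlockMin (n : ℕ) (u : ℕ → ℤ) (p q i0 : ℕ) : Prop :=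
  p ≤ i0 ∧ i0 ≤ q ∧ epsGt1 u n i0 ∧ ∀ j, p ≤ j → j < i0 → ¬ epsGt1 u n j

/-- The comparability graph of a poset: two distinct elements are adjacent
iff they are comparable. -/
def compGraph (α : Type*) [Preorder α] : SimpleGraph α where
  Adj x y := x ≠ y ∧ (x ≤ y ∨ y ≤ x)
  symm := ⟨fun x y h => ⟨Ne.symm h.1, Or.symm h.2⟩⟩
  loopless := ⟨fun x h => h.1 rfl⟩

/-- A poset is pure if all of its maximal chains have the same cardinality
(equivalently, the same length). -/
def IsPure (α : Type*) [Preorder α] : Prop :=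
  ∀ A B : Set α, IsMaxChain (· ≤ ·) A → IsMaxChain (· ≤ ·) B → A.ncard = B.ncard

/-! ### Auxiliary lemmas -/

lemma utuple_le_atuple (u : ℕ → ℤ) (n i : ℕ) (j : ℤ) :
    utuple u n ≤ atuple u n i j := by
  intro t
  simp only [utuple, atuple]
  split
  · split
    · exact le_rfl
    · exact le_max_right _ _
  · exact le_rfl

lemma atuple_apply (u : ℕ → ℤ) {n i : ℕ} {j : ℤ} (hi1 : 1 ≤ i) (hin : i ≤ n)
    (hj : u i + 1 ≤ j) : atuple u n i j i = j := by
  simp only [atuple, if_pos (And.intro hi1 hin), if_neg (lt_irrefl i)]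
  omega

lemma utuple_apply (u : ℕ → ℤ) {n i : ℕ} (hi1 : 1 ≤ i) (hin : i ≤ n) :
    utuple u n i = u i := by
  simp [utuple, hi1, hin]

lemma utuple_le_of_mem_PL {n : ℕ} {u v : ℕ → ℤ} {x : ℕ → ℤ} (hx : x ∈ PL n u v) :
    utuple u n ≤ x := by
  obtain ⟨i, j, _, _, _, _, rfl⟩ := hx
  exact utuple_le_atuple u n i j

lemma not_le_utuple_of_mem_PL {n : ℕ} {u v : ℕ → ℤ} {x : ℕ → ℤ} (hx : x ∈ PL n u v) :
    ¬ x ≤ utuple u n := by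
  obtain ⟨i, j, h1, h2, h3, h4, rfl⟩ := hx
  intro h
  have hh := h i
  rw [atuple_apply u h1 h2 h3, utuple_apply u h1 h2] at hh
  have hh2 : j ≤ u i := hh
  omega

lemma utuple_not_mem_PL {n : ℕ} {u v : ℕ → ℤ} : utuple u n ∉ PL n u v :=
  fun hx => not_le_utuple_of_mem_PL hx le_rfl

lemma PL_finite (n : ℕ) (u v : ℕ → ℤ) : (PL n u v).Finite := by
  apply Set.Finite.subset (Set.Finite.biUnion (Set.finite_Icc 1 n)
    (fun i _ => (Set.finite_Icc (u i + 1) (v i)).image (atuple u n i)))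
  rintro x ⟨i, j, h1, h2, h3, h4, rfl⟩
  exact Set.mem_biUnion ⟨h1, h2⟩ ⟨j, ⟨h3, h4⟩, rfl⟩

lemma PLr_finite (n : ℕ) (u v : ℕ → ℤ) (r : ℤ) : (PLr n u v r).Finite := by
  apply Set.Finite.subset (((PL_finite n u v).image (fun a => (a, (1:ℤ)))).union
    ((Set.finite_Icc (2:ℤ) r).image (fun k => (utuple u n, k))))
  rintro ⟨a, k⟩ (⟨h1, h2⟩ | ⟨h1, h2, h3⟩)
  · exact Or.inl ⟨a, h1, by simp_all⟩
  · exact Or.inr ⟨k, ⟨h2, h3⟩, by simp_all⟩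

lemma maxChain_nonempty {α : Type*} [Preorder α] [Nonempty α] {M : Set α}
    (h : IsMaxChain (· ≤ ·) M) : M.Nonempty := by
  rcases Set.eq_empty_or_nonempty M with rfl | hne
  · obtain ⟨x⟩ := ‹Nonempty α›
    have h2 := h.2 (Set.subsingleton_singleton.isChain (r := (· ≤ ·))) (Set.empty_subset {x})
    exact absurd h2.symm (Set.singleton_ne_empty x)
  · exact hne

theorem stmt11
    (n m : ℕ) (u v : ℕ → ℤ)
    (hn : 1 ≤ n) (hnm : n < m)
    (hu1 : u 1 = 1)
    (humono : ∀ i, 1 ≤ i → i + 1 ≤ n → u i < u (i + 1))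
    (hum : u n < (m : ℤ))
    (hv1 : 1 < v 1)
    (hvmono : ∀ i, 1 ≤ i → i + 1 ≤ n → v i < v (i + 1))
    (hvn : v n = (m : ℤ))
    (huv : ∀ i, 1 ≤ i → i ≤ n → u i < v i)
    (hstep : ∀ i, 1 ≤ i → i + 1 ≤ n → u (i + 1) ≤ v i + 1)
    (r : ℕ) (hr : 2 ≤ r) :
    IsPure ↥(PLr n u v (r : ℤ)) ↔
      (IsPure ↥(PL n u v) ∧
       (∃ A : Set ↥(PL n u v), IsChain (· ≤ ·) A ∧ A.ncard = r - 1) ∧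
       (∀ A : Set ↥(PL n u v), IsChain (· ≤ ·) A → A.ncard ≤ r - 1)) := by
  classical
  have hPfin := PL_finite n u v
  haveI : Finite ↥(PL n u v) := hPfin.to_subtype
  haveI : Finite ↥(PLr n u v (r : ℤ)) := (PLr_finite n u v (r : ℤ)).to_subtype
  have hr2 : (2:ℤ) ≤ (r:ℤ) := by exact_mod_cast hr
  have hPne : (PL n u v).Nonempty := by
    refine ⟨atuple u n 1 (u 1 + 1), 1, u 1 + 1, le_rfl, hn, le_rfl, ?_, rfl⟩
    have := huv 1 le_rfl hn; omega
  haveI : Nonempty ↥(PL n u v) := hPne.to_subtype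
  -- the embedding of PL into PLr at level 1
  let f : ↥(PL n u v) → ↥(PLr n u v (r : ℤ)) := fun a => ⟨(a.1, 1), Or.inl ⟨a.2, rfl⟩⟩
  haveI : Nonempty ↥(PLr n u v (r : ℤ)) := ⟨f (Classical.arbitrary _)⟩
  have hf1 : ∀ a, (f a).1.1 = a.1 := fun _ => rfl
  have hf2 : ∀ a, (f a).1.2 = 1 := fun _ => rfl
  have hfinj : Function.Injective f := by
    intro a b h
    apply Subtype.ext
    have h1 : (f a).1.1 = (f b).1.1 := by rw [h]
    rwa [hf1, hf1] at h1
  have hfle : ∀ a b : ↥(PL n u v), f a ≤ f b ↔ a ≤ b := by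
    intro a b
    constructor
    · intro h; exact h.1
    · intro h; exact ⟨h, le_rfl⟩
  -- case analysis on elements of PLr
  have hcases : ∀ x : ↥(PLr n u v (r : ℤ)),
      (∃ a : ↥(PL n u v), x = f a) ∨ (x.1.1 = utuple u n ∧ 2 ≤ x.1.2 ∧ x.1.2 ≤ (r:ℤ)) := by
    intro x
    rcases x.2 with h | h
    · left
      refine ⟨⟨x.1.1, h.1⟩, ?_⟩
      apply Subtype.ext
      exact Prod.ext rfl h.2
    · right; exact h
  -- incomparability between the two parts
  have hincomp : ∀ (a : ↥(PL n u v)) (x : ↥(PLr n u v (r : ℤ))),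
      x.1.1 = utuple u n → 2 ≤ x.1.2 → ¬ f a ≤ x ∧ ¬ x ≤ f a := by
    intro a x hx1 hx2
    constructor
    · intro h
      have h1 : a.1 ≤ x.1.1 := h.1
      rw [hx1] at h1
      exact not_le_utuple_of_mem_PL a.2 h1
    · intro h
      have h2 : x.1.2 ≤ (1:ℤ) := h.2
      omega
  -- the "vertical" chain U
  let U : Set ↥(PLr n u v (r : ℤ)) := {x | x.1.1 = utuple u n}
  have hUprop : ∀ x : ↥(PLr n u v (r : ℤ)), x ∈ U → 2 ≤ x.1.2 ∧ x.1.2 ≤ (r:ℤ) := by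
    intro x hx
    rcases x.2 with h | h
    · have h1 := h.1
      rw [show x.1.1 = utuple u n from hx] at h1
      exact absurd h1 utuple_not_mem_PL
    · exact ⟨h.2.1, h.2.2⟩
  have hUchain : IsChain (· ≤ ·) U := by
    intro x hx y hy hxy
    have hx' : x.1.1 = utuple u n := hx
    have hy' : y.1.1 = utuple u n := hy
    rcases le_total x.1.2 y.1.2 with h | h
    · exact Or.inl ⟨le_of_eq (hx'.trans hy'.symm), h⟩
    · exact Or.inr ⟨le_of_eq (hy'.trans hx'.symm), h⟩
  have hu2mem : ((utuple u n, (2:ℤ)) : (ℕ→ℤ)×ℤ) ∈ PLr n u v (r:ℤ) := Or.inr ⟨rfl, le_rfl, hr2⟩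
  have hUne : U.Nonempty := ⟨⟨_, hu2mem⟩, rfl⟩
  have hUmax : IsMaxChain (· ≤ ·) U := by
    refine ⟨hUchain, ?_⟩
    intro B hB hUB
    refine Set.Subset.antisymm hUB ?_
    intro x hxB
    rcases hcases x with ⟨a, rfl⟩ | h
    · exfalso
      obtain ⟨y, hyU⟩ := hUne
      have hyB := hUB hyU
      have hy1 : y.1.1 = utuple u n := hyU
      have hy2 : 2 ≤ y.1.2 := (hUprop y hyU).1
      have hne : f a ≠ y := by
        intro he
        rw [← he, hf2] at hy2
        norm_num at hy2
      rcases hB hxB hyB hne with h | h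
      · exact (hincomp a y hy1 hy2).1 h
      · exact (hincomp a y hy1 hy2).2 h
    · exact h.1
  -- the cardinality of U
  have hUcard : U.ncard = r - 1 := by
    have hgmem : ∀ k : ℤ, ((utuple u n, max 2 (min k (r:ℤ))) : (ℕ→ℤ)×ℤ) ∈ PLr n u v (r:ℤ) :=
      fun k => Or.inr ⟨rfl, le_max_left _ _, max_le hr2 (min_le_right _ _)⟩
    set g : ℤ → ↥(PLr n u v (r:ℤ)) := fun k => ⟨(utuple u n, max 2 (min k (r:ℤ))), hgmem k⟩
      with hg
    have hgval : ∀ k, (g k).1.2 = max 2 (min k (r:ℤ)) := fun _ => rfl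
    have hgval1 : ∀ k, (g k).1.1 = utuple u n := fun _ => rfl
    have hUeq : U = g '' Set.Icc 2 (r:ℤ) := by
      apply Set.Subset.antisymm
      · intro x hx
        obtain ⟨h2, hrr⟩ := hUprop x hx
        refine ⟨x.1.2, ⟨h2, hrr⟩, ?_⟩
        apply Subtype.ext
        refine Prod.ext ((hgval1 _).trans (show x.1.1 = utuple u n from hx).symm) ?_
        rw [hgval]; omega
      · rintro x ⟨k, hk, rfl⟩
        exact hgval1 k
    have hginj : Set.InjOn g (Set.Icc 2 (r:ℤ)) := by
      intro k hk l hl h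
      have h2 := congrArg (fun x : ↥(PLr n u v (r:ℤ)) => x.1.2) h
      simp only [hgval] at h2
      obtain ⟨hk1, hk2⟩ := hk
      obtain ⟨hl1, hl2⟩ := hl
      omega
    rw [hUeq, Set.ncard_image_of_injOn hginj, ← Finset.coe_Icc, Set.ncard_coe_finset,
      Int.card_Icc]
    omega
  -- any chain containing an element of the image of f lies in the image of f
  have hall_f : ∀ (M : Set ↥(PLr n u v (r:ℤ))), IsChain (· ≤ ·) M →
      ∀ a0, f a0 ∈ M → ∀ x ∈ M, ∃ a, x = f a := by
    intro M hM a0 ha0 x hx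
    rcases hcases x with h | h
    · exact h
    · exfalso
      have hne : f a0 ≠ x := by
        intro he
        have h21 := h.2.1
        rw [← he, hf2] at h21
        norm_num at h21
      rcases hM ha0 hx hne with hle | hle
      · exact (hincomp a0 x h.1 h.2.1).1 hle
      · exact (hincomp a0 x h.1 h.2.1).2 hle
  -- preimages of chains are chains
  have hpre_chain : ∀ (B : Set ↥(PLr n u v (r:ℤ))), IsChain (· ≤ ·) B →
      IsChain (· ≤ ·) (f ⁻¹' B) := by
    intro B hB a ha b hb hne
    rcases hB ha hb (fun h => hne (hfinj h)) with h | h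
    · exact Or.inl ((hfle a b).mp h)
    · exact Or.inr ((hfle b a).mp h)
  -- images of chains are chains
  have himg_chain : ∀ (M : Set ↥(PL n u v)), IsChain (· ≤ ·) M →
      IsChain (· ≤ ·) (f '' M) := by
    rintro M hM _ ⟨a, ha, rfl⟩ _ ⟨b, hb, rfl⟩ hne
    rcases hM ha hb (fun h => hne (congrArg f h)) with h | h
    · exact Or.inl ((hfle a b).mpr h)
    · exact Or.inr ((hfle b a).mpr h)
  -- images of maximal chains are maximal chains
  have himage_max : ∀ M : Set ↥(PL n u v), IsMaxChain (· ≤ ·) M →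
      IsMaxChain (· ≤ ·) (f '' M) := by
    intro M hM
    refine ⟨himg_chain M hM.1, ?_⟩
    intro B hB hMB
    obtain ⟨a0, ha0⟩ := maxChain_nonempty hM
    have ha0B : f a0 ∈ B := hMB ⟨a0, ha0, rfl⟩
    have hMeq : M = f ⁻¹' B := hM.2 (hpre_chain B hB) (fun a ha => hMB ⟨a, ha, rfl⟩)
    apply Set.Subset.antisymm hMB
    intro x hxB
    obtain ⟨a, rfl⟩ := hall_f B hB a0 ha0B x hxB
    exact ⟨a, by rw [hMeq]; exact hxB, rfl⟩
  -- maximal chains in PLr are either U or images of maximal chains in PL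
  have hmax_cases : ∀ M : Set ↥(PLr n u v (r:ℤ)), IsMaxChain (· ≤ ·) M →
      M = U ∨ ∃ M' : Set ↥(PL n u v), IsMaxChain (· ≤ ·) M' ∧ M = f '' M' := by
    intro M hM
    obtain ⟨x0, hx0⟩ := maxChain_nonempty hM
    rcases hcases x0 with ⟨a0, rfl⟩ | h0
    · right
      have hMeq : M = f '' (f ⁻¹' M) := by
        apply Set.Subset.antisymm
        · intro x hx
          obtain ⟨a, rfl⟩ := hall_f M hM.1 a0 hx0 x hx
          exact ⟨a, hx, rfl⟩
        · rintro _ ⟨a, ha, rfl⟩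
          exact ha
      refine ⟨f ⁻¹' M, ⟨hpre_chain M hM.1, ?_⟩, hMeq⟩
      intro B' hB' hMB'
      have himgB : IsChain (· ≤ ·) (f '' B') := himg_chain B' hB'
      have hsub : M ⊆ f '' B' := by
        rw [hMeq]
        exact Set.image_mono hMB'
      have hMeq2 : M = f '' B' := hM.2 himgB hsub
      apply Set.Subset.antisymm hMB'
      intro a ha
      show f a ∈ M
      rw [hMeq2]
      exact ⟨a, ha, rfl⟩
    · left
      apply hM.2 hUchain
      intro x hx
      rcases hcases x with ⟨a, rfl⟩ | h
      · exfalso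
        have hne : f a ≠ x0 := by
          intro he
          have h21 := h0.2.1
          rw [← he, hf2] at h21
          norm_num at h21
        rcases hM.1 hx hx0 hne with hle | hle
        · exact (hincomp a x0 h0.1 h0.2.1).1 hle
        · exact (hincomp a x0 h0.1 h0.2.1).2 hle
      · exact h.1
  -- finish
  constructor
  · intro hpure
    have hcardQ : ∀ M : Set ↥(PLr n u v (r:ℤ)), IsMaxChain (· ≤ ·) M → M.ncard = r - 1 := by
      intro M hM
      rw [hpure M U hM hUmax, hUcard]
    have hmaxP : ∀ M : Set ↥(PL n u v), IsMaxChain (· ≤ ·) M → M.ncard = r - 1 := by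
      intro M hM
      have h := hcardQ (f '' M) (himage_max M hM)
      rwa [Set.ncard_image_of_injective M hfinj] at h
    have hex : ∃ M : Set ↥(PL n u v), IsMaxChain (· ≤ ·) M := by
      obtain ⟨M, hM, -⟩ :=
        IsChain.exists_maxChain (IsChain.empty (r := (· ≤ ·)) (α := ↥(PL n u v)))
      exact ⟨M, hM⟩
    obtain ⟨M0, hM0⟩ := hex
    refine ⟨?_, ⟨M0, hM0.1, hmaxP M0 hM0⟩, ?_⟩
    · intro A B hA hB
      rw [hmaxP A hA, hmaxP B hB]
    · intro A hA
      obtain ⟨M, hM, hAM⟩ := hA.exists_maxChain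
      rw [← hmaxP M hM]
      exact Set.ncard_le_ncard hAM (Set.toFinite M)
  · rintro ⟨hPpure, ⟨A0, hA0c, hA0card⟩, hbound⟩
    obtain ⟨M0, hM0, hA0M0⟩ := hA0c.exists_maxChain
    have hM0card : M0.ncard = r - 1 := by
      have h1 : A0.ncard ≤ M0.ncard := Set.ncard_le_ncard hA0M0 (Set.toFinite M0)
      have h2 : M0.ncard ≤ r - 1 := hbound M0 hM0.1
      omega
    have hmaxP : ∀ M : Set ↥(PL n u v), IsMaxChain (· ≤ ·) M → M.ncard = r - 1 := by
      intro M hM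
      rw [hPpure M M0 hM hM0, hM0card]
    intro A B hA hB
    have key : ∀ M : Set ↥(PLr n u v (r:ℤ)), IsMaxChain (· ≤ ·) M → M.ncard = r - 1 := by
      intro M hM
      rcases hmax_cases M hM with rfl | ⟨M', hM', rfl⟩
      · exact hUcard
      · rw [Set.ncard_image_of_injective M' hfinj]
        exact hmaxP M' hM'
    rw [key A hA, key B hB]

end LadderPaper
end

section
/- Suppose v_i ≥ u_{i+1} for all i ∈ [n−1]. Then the poset P_𝓛 is pure if and only if both of the following hold: (a) u_k − u_i = 2(k − i) for all i, k ∈ [n] with i ≤ k such that ε_i > 1 and ε_k > 1; (b) v_k − v_i = 2(k − i) for all i, k ∈ [n] with i ≤ k such that θ_{i−1} > 1 and θ_{k−1} > 1. -/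
namespace LadderPaper

section Machinery
variable {α : Type*} [PartialOrder α]

lemma mem_maxChain_of_comp {A : Set α} (hA : IsMaxChain (· ≤ ·) A) {z : α}
    (hz : ∀ w ∈ A, z ≤ w ∨ w ≤ z) : z ∈ A := by
  have hch : IsChain (· ≤ ·) (insert z A) := by
    intro a ha b hb hab
    rcases ha with rfl | ha
    · rcases hb with rfl | hb
      · exact absurd rfl hab
      · exact hz b hb
    · rcases hb with rfl | hb
      · exact (hz a ha).symm
      · exact hA.1 ha hb hab
  have := hA.2 hch (Set.subset_insert z A)
  rw [this]; exact Set.mem_insert _ _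

lemma chain_greatest {A B : Set α} (hA : IsChain (· ≤ ·) A) (hBA : B ⊆ A)
    (hfin : B.Finite) (hne : B.Nonempty) : ∃ a ∈ B, ∀ w ∈ B, w ≤ a := by
  obtain ⟨a, haB, ha⟩ := Set.Finite.exists_maximalFor id B hfin hne
  refine ⟨a, haB, fun w hw => ?_⟩
  rcases eq_or_ne w a with rfl | hne'
  · exact le_refl _
  · rcases hA (hBA haB) (hBA hw) (Ne.symm hne') with h | h
    · exact ha hw h
    · exact h

lemma chain_least {A B : Set α} (hA : IsChain (· ≤ ·) A) (hBA : B ⊆ A)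
    (hfin : B.Finite) (hne : B.Nonempty) : ∃ a ∈ B, ∀ w ∈ B, a ≤ w := by
  obtain ⟨a, haB, ha⟩ := Set.Finite.exists_minimalFor id B hfin hne
  refine ⟨a, haB, fun w hw => ?_⟩
  rcases eq_or_ne w a with rfl | hne'
  · exact le_refl _
  · rcases hA (hBA haB) (hBA hw) (Ne.symm hne') with h | h
    · exact h
    · exact ha hw h

lemma maxChain_card [Finite α] [Nonempty α] (ρ : α → ℤ)
    (hmono : ∀ x y : α, x < y → ρ x < ρ y)
    (hcov : ∀ x y : α, x < y → (∀ z, x < z → z < y → False) → ρ y = ρ x + 1)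
    {A : Set α} (hA : IsMaxChain (· ≤ ·) A) :
    ∃ x₀ x₁, x₀ ∈ A ∧ x₁ ∈ A ∧ (∀ w ∈ A, x₀ ≤ w) ∧ (∀ w ∈ A, w ≤ x₁) ∧
      (∀ z, z ≤ x₀ → z = x₀) ∧ (∀ z, x₁ ≤ z → z = x₁) ∧
      (A.ncard : ℤ) = ρ x₁ - ρ x₀ + 1 := by
  have hfin : A.Finite := Set.toFinite A
  have hne : A.Nonempty := by
    by_contra h
    rw [Set.not_nonempty_iff_eq_empty] at h
    obtain ⟨x⟩ := ‹Nonempty α›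
    have : x ∈ A := mem_maxChain_of_comp hA (by simp [h])
    simp [h] at this
  obtain ⟨x₁, hx₁A, hx₁⟩ := chain_greatest hA.1 (le_refl A) hfin hne
  obtain ⟨x₀, hx₀A, hx₀⟩ := chain_least hA.1 (le_refl A) hfin hne
  -- x₀ minimal, x₁ maximal in α
  have hmin : ∀ z, z ≤ x₀ → z = x₀ := by
    intro z hz
    have hzA : z ∈ A := mem_maxChain_of_comp hA (fun w hw => Or.inl (hz.trans (hx₀ w hw)))
    exact le_antisymm hz (hx₀ z hzA)
  have hmax : ∀ z, x₁ ≤ z → z = x₁ := by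
    intro z hz
    have hzA : z ∈ A := mem_maxChain_of_comp hA (fun w hw => Or.inr ((hx₁ w hw).trans hz))
    exact le_antisymm (hx₁ z hzA) hz
  -- saturation: adjacent elements of A are covers
  have hsat : ∀ a ∈ A, ∀ b ∈ A, a < b → (∀ w ∈ A, a < w → w < b → False) →
      ∀ z, a < z → z < b → False := by
    intro a haA b hbA hab hnomid z haz hzb
    have hzA : z ∈ A := by
      apply mem_maxChain_of_comp hA
      intro w hw
      rcases eq_or_ne w a with rfl | hwa
      · exact Or.inr haz.le
      rcases eq_or_ne w b with rfl | hwb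
      · exact Or.inl hzb.le
      rcases hA.1 haA hw hwa.symm with h | h
      · rcases hA.1 hw hbA hwb with h' | h'
        · exact (hnomid w hw (lt_of_le_of_ne h (Ne.symm hwa))
            (lt_of_le_of_ne h' hwb)).elim
        · exact Or.inl (hzb.le.trans h')
      · exact Or.inr (h.trans haz.le)
    exact hnomid z hzA haz hzb
  -- ρ image is an interval
  have himg : ρ '' A = Set.Icc (ρ x₀) (ρ x₁) := by
    apply Set.Subset.antisymm
    · rintro r ⟨w, hw, rfl⟩
      constructor
      · rcases eq_or_lt_of_le (hx₀ w hw) with h | h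
        · exact le_of_eq (congrArg ρ h)
        · exact (hmono _ _ h).le
      · rcases eq_or_lt_of_le (hx₁ w hw) with h | h
        · exact le_of_eq (congrArg ρ h)
        · exact (hmono _ _ h).le
    · rintro r ⟨hr₀, hr₁⟩
      by_contra hr
      have hr0 : ρ x₀ < r := by
        rcases eq_or_lt_of_le hr₀ with h | h
        · exact absurd ⟨x₀, hx₀A, h⟩ hr
        · exact h
      set B := {w ∈ A | ρ w < r} with hB
      set C := {w ∈ A | r ≤ ρ w} with hC
      have hBsub : B ⊆ A := fun w hw => hw.1
      have hCsub : C ⊆ A := fun w hw => hw.1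
      obtain ⟨a, haB, ha⟩ := chain_greatest hA.1 hBsub (hfin.subset hBsub) ⟨x₀, hx₀A, hr0⟩
      obtain ⟨b, hbC, hb⟩ := chain_least hA.1 hCsub (hfin.subset hCsub) ⟨x₁, hx₁A, hr₁⟩
      have hba : ¬ b ≤ a := by
        intro h
        have h2 : ρ b ≤ ρ a := by
          rcases eq_or_lt_of_le h with h' | h'
          · exact le_of_eq (congrArg ρ h')
          · exact (hmono _ _ h').le
        have := haB.2; have := hbC.2; omega
      have hab : a < b := by
        rcases hA.1 haB.1 hbC.1 (fun h => hba (le_of_eq h.symm)) with h | h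
        · exact lt_of_le_of_ne h (fun h' => hba (le_of_eq h'.symm))
        · exact absurd h hba
      have hcb : ρ b = ρ a + 1 := by
        apply hcov a b hab
        apply hsat a haB.1 b hbC.1 hab
        intro w hw haw hwb
        rcases lt_or_ge (ρ w) r with h | h
        · exact haw.not_ge (ha w ⟨hw, h⟩)
        · exact hwb.not_ge (hb w ⟨hw, h⟩)
      have : r = ρ b := by
        have := haB.2
        have := hbC.2
        omega
      exact hr ⟨b, hbC.1, this.symm⟩
  have hinj : Set.InjOn ρ A := by
    intro w hw w' hw' hww
    rcases eq_or_ne w w' with h | h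
    · exact h
    · rcases hA.1 hw hw' h with h' | h'
      · exact absurd hww (ne_of_lt (hmono _ _ (lt_of_le_of_ne h' h)))
      · exact absurd hww.symm (ne_of_lt (hmono _ _ (lt_of_le_of_ne h' (Ne.symm h))))
  have hle01 : ρ x₀ ≤ ρ x₁ := by
    rcases eq_or_lt_of_le (hx₁ x₀ hx₀A) with h | h
    · exact le_of_eq (congrArg ρ h)
    · exact (hmono _ _ h).le
  refine ⟨x₀, x₁, hx₀A, hx₁A, hx₀, hx₁, hmin, hmax, ?_⟩
  have h1 : A.ncard = (ρ '' A).ncard := (Set.ncard_image_of_injOn hinj).symm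
  rw [h1, himg, ← Finset.coe_Icc, Set.ncard_coe_finset, Int.card_Icc]
  omega

lemma exists_maxChain_card [Finite α] [Nonempty α] (ρ : α → ℤ)
    (hmono : ∀ x y : α, x < y → ρ x < ρ y)
    (hcov : ∀ x y : α, x < y → (∀ z, x < z → z < y → False) → ρ y = ρ x + 1)
    {x y : α} (hxy : x ≤ y)
    (hxmin : ∀ z, z ≤ x → z = x) (hymax : ∀ z, y ≤ z → z = y) :
    ∃ A : Set α, IsMaxChain (· ≤ ·) A ∧ (A.ncard : ℤ) = ρ y - ρ x + 1 := by
  have hch : IsChain (· ≤ ·) ({x, y} : Set α) := by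
    clear hxmin hymax hcov hmono
    intro a ha b hb hab
    rcases ha with rfl | ha <;> rcases hb with rfl | hb <;>
      simp_all <;> first | exact Or.inl hxy | exact Or.inr hxy
  obtain ⟨A, hA, hsub⟩ := hch.exists_maxChain
  obtain ⟨x₀, x₁, hx₀A, hx₁A, hle, hge, hmin, hmax, hcard⟩ := maxChain_card ρ hmono hcov hA
  have hx : x₀ = x := hxmin x₀ (hle x (hsub (by simp)))
  have hy : x₁ = y := hymax x₁ (hge y (hsub (by simp)))
  exact ⟨A, hA, by rw [hcard, hx, hy]⟩

lemma pure_rank_diff [Finite α] [Nonempty α] (ρ : α → ℤ)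
    (hmono : ∀ x y : α, x < y → ρ x < ρ y)
    (hcov : ∀ x y : α, x < y → (∀ z, x < z → z < y → False) → ρ y = ρ x + 1)
    (hpure : IsPure α) {x y x' y' : α} (hxy : x ≤ y) (hxy' : x' ≤ y')
    (hxmin : ∀ z, z ≤ x → z = x) (hymax : ∀ z, y ≤ z → z = y)
    (hxmin' : ∀ z, z ≤ x' → z = x') (hymax' : ∀ z, y' ≤ z → z = y') :
    ρ y - ρ x = ρ y' - ρ x' := by
  obtain ⟨A, hA, hcA⟩ := exists_maxChain_card ρ hmono hcov hxy hxmin hymax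
  obtain ⟨B, hB, hcB⟩ := exists_maxChain_card ρ hmono hcov hxy' hxmin' hymax'
  have := hpure A B hA hB
  omega

lemma pure_of_const_rank [Finite α] [Nonempty α] (ρ : α → ℤ)
    (hmono : ∀ x y : α, x < y → ρ x < ρ y)
    (hcov : ∀ x y : α, x < y → (∀ z, x < z → z < y → False) → ρ y = ρ x + 1)
    (rmin rmax : ℤ)
    (hmin : ∀ x : α, (∀ z, z ≤ x → z = x) → ρ x = rmin)
    (hmax : ∀ x : α, (∀ z, x ≤ z → z = x) → ρ x = rmax) :
    IsPure α := by
  intro A B hA hB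
  obtain ⟨x₀, x₁, _, _, _, _, hminA, hmaxA, hcA⟩ := maxChain_card ρ hmono hcov hA
  obtain ⟨y₀, y₁, _, _, _, _, hminB, hmaxB, hcB⟩ := maxChain_card ρ hmono hcov hB
  have e1 := hmin x₀ hminA
  have e2 := hmax x₁ hmaxA
  have e3 := hmin y₀ hminB
  have e4 := hmax y₁ hmaxB
  omega

lemma isMaxChain_image {β : Type*} [PartialOrder β] (e : α ≃o β) {A : Set α}
    (hA : IsMaxChain (· ≤ ·) A) : IsMaxChain (· ≤ ·) ((e : α → β) '' A) := by
  constructor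
  · rintro _ ⟨a, ha, rfl⟩ _ ⟨b, hb, rfl⟩ hab
    have hne : a ≠ b := fun h => hab (congrArg _ h)
    rcases hA.1 ha hb hne with h | h
    · exact Or.inl (e.le_iff_le.2 h)
    · exact Or.inr (e.le_iff_le.2 h)
  · intro t ht hsub
    have ht' : IsChain (· ≤ ·) ((e.symm : β → α) '' t) := by
      rintro _ ⟨a, ha, rfl⟩ _ ⟨b, hb, rfl⟩ hab
      have hne : a ≠ b := fun h => hab (congrArg _ h)
      rcases ht ha hb hne with h | h
      · exact Or.inl (e.symm.le_iff_le.2 h)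
      · exact Or.inr (e.symm.le_iff_le.2 h)
    have hsub' : A ⊆ (e.symm : β → α) '' t := by
      intro a ha
      exact ⟨e a, hsub ⟨a, ha, rfl⟩, e.symm_apply_apply a⟩
    have hAeq := hA.2 ht' hsub'
    apply Set.Subset.antisymm hsub
    intro b hb
    have : e.symm b ∈ A := by rw [hAeq]; exact ⟨b, hb, rfl⟩
    exact ⟨e.symm b, this, e.apply_symm_apply b⟩

lemma isPure_of_orderIso {β : Type*} [PartialOrder β] (e : α ≃o β)
    (h : IsPure β) : IsPure α := by
  intro A B hA hB
  have h1 := h _ _ (isMaxChain_image e hA) (isMaxChain_image e hB)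
  rwa [Set.ncard_image_of_injective _ e.injective,
    Set.ncard_image_of_injective _ e.injective] at h1

lemma isPure_congr {β : Type*} [PartialOrder β] (e : α ≃o β) :
    IsPure α ↔ IsPure β :=
  ⟨fun h => isPure_of_orderIso e.symm h, fun h => isPure_of_orderIso e h⟩

end Machinery

section Gadget
variable {γ α β : Type*} [PartialOrder α] [PartialOrder β]

noncomputable def orderIsoOfImages (S : Set γ) (g : γ → α) (h : γ → β)
    (hinj : ∀ p ∈ S, ∀ q ∈ S, h p = h q → p = q)
    (hle : ∀ p ∈ S, ∀ q ∈ S, (g p ≤ g q ↔ h p ≤ h q)) :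
    ↥(g '' S) ≃o ↥(h '' S) := by
  classical
  have hch : ∀ x : ↥(g '' S), ∃ p, p ∈ S ∧ g p = (x : α) := by
    rintro ⟨x, p, hp, rfl⟩; exact ⟨p, hp, rfl⟩
  choose p hpS hpg using hch
  let f : ↥(g '' S) → ↥(h '' S) := fun x => ⟨h (p x), ⟨p x, hpS x, rfl⟩⟩
  have hfle : ∀ x y, x ≤ y ↔ f x ≤ f y := by
    intro x y
    have h1 : g (p x) ≤ g (p y) ↔ h (p x) ≤ h (p y) := hle _ (hpS x) _ (hpS y)
    rw [← Subtype.coe_le_coe, ← hpg x, ← hpg y]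
    exact h1
  have hinj' : Function.Injective f := by
    intro x y hxy
    have : h (p x) = h (p y) := congrArg Subtype.val hxy
    have : p x = p y := hinj _ (hpS x) _ (hpS y) this
    apply Subtype.ext
    rw [← hpg x, ← hpg y, this]
  have hsurj : Function.Surjective f := by
    rintro ⟨y, q, hq, rfl⟩
    refine ⟨⟨g q, q, hq, rfl⟩, ?_⟩
    apply Subtype.ext
    set x : ↥(g '' S) := ⟨g q, q, hq, rfl⟩ with hx
    have h1 : g (p x) = g q := hpg x
    have h2 : h (p x) ≤ h q := (hle _ (hpS x) _ hq).1 (le_of_eq h1)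
    have h3 : h q ≤ h (p x) := (hle _ hq _ (hpS x)).1 (le_of_eq h1.symm)
    exact le_antisymm h2 h3
  exact { toEquiv := Equiv.ofBijective f ⟨hinj', hsurj⟩,
          map_rel_iff' := fun {x y} => (hfle x y).symm }

end Gadget

section Atuple
variable {n : ℕ} {u v : ℕ → ℤ}

lemma mono_gap {w : ℕ → ℤ} (hmono : ∀ i, 1 ≤ i → i + 1 ≤ n → w i < w (i + 1)) :
    ∀ s t, 1 ≤ s → s ≤ t → t ≤ n → w s + ((t : ℤ) - (s : ℤ)) ≤ w t := by
  intro s t hs hst htn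
  induction t with
  | zero => omega
  | succ t ih =>
    rcases Nat.eq_or_lt_of_le hst with rfl | hlt
    · push_cast; omega
    · have h1 : s ≤ t := Nat.lt_succ_iff.1 hlt
      have h2 := ih h1 (by omega)
      have h3 := hmono t (by omega) (by omega)
      push_cast at h2 ⊢; omega

lemma atuple_le_iff
    {i i' : ℕ} {j j' : ℤ}
    (hi1 : 1 ≤ i) (hin : i ≤ n) (hj : u i + 1 ≤ j)
    (hi1' : 1 ≤ i') (hin' : i' ≤ n) (hj' : u i' + 1 ≤ j') :
    atuple u n i j ≤ atuple u n i' j' ↔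
      (i' ≤ i ∧ j - (i : ℤ) ≤ j' - (i' : ℤ)) := by
  constructor
  · intro h
    have ht := h i
    simp only [atuple, if_pos (⟨hi1, hin⟩ : 1 ≤ i ∧ i ≤ n), if_neg (lt_irrefl i)] at ht
    have hm : max (j + ((i:ℤ) - (i:ℤ))) (u i) = j := by
      rw [show j + ((i:ℤ) - (i:ℤ)) = j by ring]
      exact max_eq_left (by omega)
    rw [hm] at ht
    by_cases hii : i < i'
    · rw [if_pos hii] at ht; omega
    · rw [if_neg hii] at ht
      rcases le_max_iff.1 ht with h' | h'
      · exact ⟨not_lt.1 hii, by omega⟩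
      · omega
  · rintro ⟨h1, h2⟩ t
    simp only [atuple]
    by_cases hrange : 1 ≤ t ∧ t ≤ n
    · rw [if_pos hrange, if_pos hrange]
      by_cases ht' : t < i'
      · rw [if_pos ht', if_pos (lt_of_lt_of_le ht' h1)]
      · rw [if_neg ht']
        by_cases hti : t < i
        · rw [if_pos hti]; exact le_max_right _ _
        · rw [if_neg hti]
          refine max_le_max ?_ le_rfl
          omega
    · rw [if_neg hrange, if_neg hrange]

lemma atuple_inj
    {i i' : ℕ} {j j' : ℤ}
    (hi1 : 1 ≤ i) (hin : i ≤ n) (hj : u i + 1 ≤ j)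
    (hi1' : 1 ≤ i') (hin' : i' ≤ n) (hj' : u i' + 1 ≤ j')
    (h : atuple u n i j = atuple u n i' j') : i = i' ∧ j = j' := by
  have h1 := (atuple_le_iff hi1 hin hj hi1' hin' hj').1 (le_of_eq h)
  have h2 := (atuple_le_iff hi1' hin' hj' hi1 hin hj).1 (le_of_eq h.symm)
  omega

end Atuple

/-- The image of `P_𝓛` in `ℤ × ℤ` under `a_{i,j} ↦ (-i, j-i)`, with the product order. -/
def QL (n : ℕ) (u v : ℕ → ℤ) : Set (ℤ × ℤ) :=
  {q | ∃ i : ℕ, 1 ≤ i ∧ i ≤ n ∧ q.1 = -(i : ℤ) ∧ u i + 1 - i ≤ q.2 ∧ q.2 ≤ v i - i}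

noncomputable def plIso (n : ℕ) (u v : ℕ → ℤ) : ↥(PL n u v) ≃o ↥(QL n u v) := by
  have hPL : PL n u v =
      (fun p : ℕ × ℤ => atuple u n p.1 p.2) ''
        {p : ℕ × ℤ | 1 ≤ p.1 ∧ p.1 ≤ n ∧ u p.1 + 1 ≤ p.2 ∧ p.2 ≤ v p.1} := by
    ext x
    constructor
    · rintro ⟨i, j, h1, h2, h3, h4, rfl⟩; exact ⟨(i, j), ⟨h1, h2, h3, h4⟩, rfl⟩
    · rintro ⟨⟨i, j⟩, ⟨h1, h2, h3, h4⟩, rfl⟩; exact ⟨i, j, h1, h2, h3, h4, rfl⟩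
  have hQL : QL n u v =
      (fun p : ℕ × ℤ => ((-(p.1 : ℤ), p.2 - p.1) : ℤ × ℤ)) ''
        {p : ℕ × ℤ | 1 ≤ p.1 ∧ p.1 ≤ n ∧ u p.1 + 1 ≤ p.2 ∧ p.2 ≤ v p.1} := by
    ext q
    constructor
    · rintro ⟨i, h1, h2, h3, h4, h5⟩
      refine ⟨(i, q.2 + i), ⟨h1, h2, ?_, ?_⟩, ?_⟩
      · show u i + 1 ≤ q.2 + (i : ℤ); omega
      · show q.2 + (i : ℤ) ≤ v i; omega
      · rw [Prod.ext_iff]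
        refine ⟨h3.symm, ?_⟩
        show q.2 + (i : ℤ) - i = q.2; ring
    · rintro ⟨⟨i, j⟩, ⟨h1, h2, h3, h4⟩, rfl⟩
      replace h3 : u i + 1 ≤ j := h3
      replace h4 : j ≤ v i := h4
      refine ⟨i, h1, h2, rfl, ?_, ?_⟩
      · show u i + 1 - (i : ℤ) ≤ j - i; omega
      · show j - (i : ℤ) ≤ v i - i; omega
  rw [hPL, hQL]
  apply orderIsoOfImages
  · rintro ⟨i, j⟩ ⟨h1, h2, h3, h4⟩ ⟨i', j'⟩ ⟨h1', h2', h3', h4'⟩ heq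
    rw [Prod.ext_iff] at heq
    simp only at heq
    have : i = i' := by omega
    subst this
    have : j = j' := by omega
    rw [this]
  · rintro ⟨i, j⟩ ⟨h1, h2, h3, h4⟩ ⟨i', j'⟩ ⟨h1', h2', h3', h4'⟩
    rw [atuple_le_iff h1 h2 h3 h1' h2' h3', Prod.le_def]
    show _ ↔ (-(i:ℤ) ≤ -(i':ℤ) ∧ j - i ≤ j' - i')
    constructor
    · rintro ⟨ha, hb⟩; exact ⟨by omega, hb⟩
    · rintro ⟨ha, hb⟩; exact ⟨by omega, hb⟩

section QLGeom
variable {n : ℕ} {u v : ℕ → ℤ}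

lemma mono_gap' {w : ℕ → ℤ} (hmono : ∀ i, 1 ≤ i → i + 1 ≤ n → w i < w (i + 1)) :
    ∀ s t, 1 ≤ s → s ≤ t → t ≤ n → w s + ((t : ℤ) - (s : ℤ)) ≤ w t := by
  intro s t hs hst htn
  induction t with
  | zero => omega
  | succ t ih =>
    rcases Nat.eq_or_lt_of_le hst with rfl | hlt
    · push_cast; omega
    · have h1 : s ≤ t := Nat.lt_succ_iff.1 hlt
      have h2 := ih h1 (by omega)
      have h3 := hmono t (by omega) (by omega)
      push_cast at h2 ⊢; omega

lemma ql_finite (humono : ∀ i, 1 ≤ i → i + 1 ≤ n → u i < u (i + 1))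
    (hvmono : ∀ i, 1 ≤ i → i + 1 ≤ n → v i < v (i + 1)) :
    (QL n u v).Finite := by
  apply Set.Finite.subset
    ((Finset.Icc (-(n:ℤ)) (-1) ×ˢ Finset.Icc (u 1 - 1 + 1) (v n - n)).finite_toSet)
  rintro ⟨a, b⟩ ⟨i, h1, h2, h3, h4, h5⟩
  simp only [Finset.coe_product, Set.mem_prod, Finset.mem_coe, Finset.mem_Icc]
  have g1 := mono_gap' humono 1 i le_rfl h1 h2
  have g2 := mono_gap' hvmono i n h1 h2 le_rfl
  simp only at h3 h4 h5
  constructor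
  · constructor <;> omega
  · constructor <;> omega

lemma ql_mono : ∀ x y : ↥(QL n u v), x < y →
    (x : ℤ × ℤ).1 + (x : ℤ × ℤ).2 < (y : ℤ × ℤ).1 + (y : ℤ × ℤ).2 := by
  intro x y hxy
  have hle : (x : ℤ × ℤ) ≤ (y : ℤ × ℤ) := Subtype.coe_le_coe.2 hxy.le
  have hne : (x : ℤ × ℤ) ≠ (y : ℤ × ℤ) := fun h => hxy.ne (Subtype.ext h)
  rw [Prod.le_def] at hle
  rw [Ne, Prod.ext_iff, not_and_or] at hne
  rcases hne with h | h
  · have := lt_of_le_of_ne hle.1 h; omega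
  · have := lt_of_le_of_ne hle.2 h; omega

lemma prod_lt_of {p q : ℤ × ℤ} (h1 : p.1 ≤ q.1) (h2 : p.2 ≤ q.2)
    (h3 : p.1 < q.1 ∨ p.2 < q.2) : p < q := by
  rcases h3 with h | h
  · exact Prod.lt_iff.2 (Or.inl ⟨h, h2⟩)
  · exact Prod.lt_iff.2 (Or.inr ⟨h1, h⟩)

lemma ql_cov (humono : ∀ i, 1 ≤ i → i + 1 ≤ n → u i < u (i + 1))
    (hvmono : ∀ i, 1 ≤ i → i + 1 ≤ n → v i < v (i + 1)) :
    ∀ x y : ↥(QL n u v), x < y → (∀ z : ↥(QL n u v), x < z → z < y → False) →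
      (y : ℤ × ℤ).1 + (y : ℤ × ℤ).2 = ((x : ℤ × ℤ).1 + (x : ℤ × ℤ).2) + 1 := by
  intro x y hxy hnomid
  obtain ⟨i, hi1, hin, hxa, hxl, hxr⟩ := x.2
  obtain ⟨i', hi1', hin', hya, hyl, hyr⟩ := y.2
  have hle : (x : ℤ × ℤ) ≤ (y : ℤ × ℤ) := Subtype.coe_le_coe.2 hxy.le
  rw [Prod.le_def] at hle
  obtain ⟨h1, h2⟩ := hle
  have hmono := ql_mono x y hxy
  by_contra hcon
  have hρ : (x : ℤ × ℤ).1 + (x : ℤ × ℤ).2 + 2 ≤ (y : ℤ × ℤ).1 + (y : ℤ × ℤ).2 := by omega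
  have hii : i' ≤ i := by omega
  by_cases hA : (x : ℤ × ℤ).2 < (y : ℤ × ℤ).2 ∧ (x : ℤ × ℤ).2 + 1 ≤ v i - i
  · set z : ↥(QL n u v) := ⟨((x : ℤ × ℤ).1, (x : ℤ × ℤ).2 + 1),
      ⟨i, hi1, hin, hxa, by omega, hA.2⟩⟩ with hz
    have hz1 : (z : ℤ × ℤ).1 = (x : ℤ × ℤ).1 := rfl
    have hz2 : (z : ℤ × ℤ).2 = (x : ℤ × ℤ).2 + 1 := rfl
    apply hnomid z
    · apply Subtype.coe_lt_coe.1
      exact prod_lt_of (le_of_eq hz1.symm) (by omega) (Or.inr (by omega))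
    · apply Subtype.coe_lt_coe.1
      exact prod_lt_of (by omega) (by omega) (by omega)
  · have hii' : i' < i := by
      rcases Nat.lt_or_ge i' i with h | h
      · exact h
      · exfalso
        have : i' = i := by omega
        subst this
        have : (x : ℤ × ℤ).2 < (y : ℤ × ℤ).2 := by omega
        exact hA ⟨this, by omega⟩
  -- z = (-(i-1), x.2)
    have hi2 : 2 ≤ i := by omega
    have hu1 := humono (i - 1) (by omega) (by omega)
    rw [show i - 1 + 1 = i by omega] at hu1
    have hv1 := mono_gap' hvmono i' (i - 1) hi1' (by omega) (by omega)
    set z : ↥(QL n u v) := ⟨(-((i - 1 : ℕ) : ℤ), (x : ℤ × ℤ).2),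
      ⟨i - 1, by omega, by omega, rfl, by omega, by omega⟩⟩ with hz
    have hz1 : (z : ℤ × ℤ).1 = -((i - 1 : ℕ) : ℤ) := rfl
    have hz2 : (z : ℤ × ℤ).2 = (x : ℤ × ℤ).2 := rfl
    apply hnomid z
    · apply Subtype.coe_lt_coe.1
      exact prod_lt_of (by omega) (by omega) (Or.inl (by omega))
    · apply Subtype.coe_lt_coe.1
      exact prod_lt_of (by omega) (by omega) (by omega)

lemma ql_min_bwd (humono : ∀ i, 1 ≤ i → i + 1 ≤ n → u i < u (i + 1))
    {x : ↥(QL n u v)} {i : ℕ} (hi1 : 1 ≤ i) (hin : i ≤ n)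
    (hxa : (x : ℤ × ℤ).1 = -(i : ℤ)) (hxb : (x : ℤ × ℤ).2 = u i + 1 - i)
    (heps : epsGt1 u n i) :
    ∀ z : ↥(QL n u v), z ≤ x → z = x := by
  intro z hz
  obtain ⟨i'', h1, h2, h3, h4, h5⟩ := z.2
  have hle : (z : ℤ × ℤ) ≤ (x : ℤ × ℤ) := Subtype.coe_le_coe.2 hz
  rw [Prod.le_def] at hle
  have hii : i ≤ i'' := by omega
  rcases Nat.eq_or_lt_of_le hii with rfl | hlt
  · apply Subtype.ext
    rw [Prod.ext_iff]
    constructor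
    · omega
    · omega
  · exfalso
    rcases heps with rfl | heps
    · omega
    · have hg := mono_gap' humono (i + 1) i'' (by omega) (by omega) h2
      push_cast at hg
      omega

lemma ql_min_fwd (humono : ∀ i, 1 ≤ i → i + 1 ≤ n → u i < u (i + 1))
    (huv : ∀ i, 1 ≤ i → i ≤ n → u i < v i)
    {x : ↥(QL n u v)} (hmin : ∀ z : ↥(QL n u v), z ≤ x → z = x) :
    ∃ i : ℕ, 1 ≤ i ∧ i ≤ n ∧ (x : ℤ × ℤ).1 = -(i : ℤ) ∧
      (x : ℤ × ℤ).2 = u i + 1 - i ∧ epsGt1 u n i := by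
  obtain ⟨i, hi1, hin, hxa, hxl, hxr⟩ := x.2
  have hxb : (x : ℤ × ℤ).2 = u i + 1 - i := by
    by_contra hb
    have hb' : u i + 1 - i < (x : ℤ × ℤ).2 := by omega
    set z : ↥(QL n u v) := ⟨((x : ℤ × ℤ).1, (x : ℤ × ℤ).2 - 1),
      ⟨i, hi1, hin, hxa, by omega, by omega⟩⟩ with hz
    have hzx : z ≤ x := by
      apply Subtype.coe_le_coe.1
      rw [Prod.le_def]
      exact ⟨le_rfl, by show (x : ℤ × ℤ).2 - 1 ≤ _; omega⟩
    have := congrArg (fun w : ↥(QL n u v) => (w : ℤ × ℤ).2) (hmin z hzx)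
    simp only [hz] at this
    omega
  refine ⟨i, hi1, hin, hxa, hxb, ?_⟩
  by_contra heps
  simp only [epsGt1, not_or, not_lt] at heps
  obtain ⟨hne, hstep⟩ := heps
  have hlt : i < n := by omega
  have hu1 := humono i hi1 (by omega)
  have huv1 := huv (i + 1) (by omega) (by omega)
  set z : ↥(QL n u v) := ⟨(-((i + 1 : ℕ) : ℤ), (x : ℤ × ℤ).2),
    ⟨i + 1, by omega, by omega, rfl,
      by show u (i+1) + 1 - ((i+1 : ℕ) : ℤ) ≤ (x : ℤ × ℤ).2; push_cast; omega,
      by show (x : ℤ × ℤ).2 ≤ v (i+1) - ((i+1 : ℕ) : ℤ); push_cast; omega⟩⟩ with hz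
  have hzx : z ≤ x := by
    apply Subtype.coe_le_coe.1
    rw [Prod.le_def]
    constructor
    · show -((i + 1 : ℕ) : ℤ) ≤ _; push_cast; omega
    · exact le_rfl
  have := congrArg (fun w : ↥(QL n u v) => (w : ℤ × ℤ).1) (hmin z hzx)
  simp only [hz] at this
  push_cast at this
  omega

lemma ql_max_bwd (hvmono : ∀ i, 1 ≤ i → i + 1 ≤ n → v i < v (i + 1))
    {x : ↥(QL n u v)} {k : ℕ} (hk1 : 1 ≤ k) (hkn : k ≤ n)
    (hxa : (x : ℤ × ℤ).1 = -(k : ℤ)) (hxb : (x : ℤ × ℤ).2 = v k - k)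
    (hth : thetaGt1 v k) :
    ∀ z : ↥(QL n u v), x ≤ z → z = x := by
  intro z hz
  obtain ⟨k'', h1, h2, h3, h4, h5⟩ := z.2
  have hle : (x : ℤ × ℤ) ≤ (z : ℤ × ℤ) := Subtype.coe_le_coe.2 hz
  rw [Prod.le_def] at hle
  have hkk : k'' ≤ k := by omega
  rcases Nat.eq_or_lt_of_le hkk with rfl | hlt
  · apply Subtype.ext
    rw [Prod.ext_iff]
    constructor
    · omega
    · omega
  · exfalso
    rcases hth with rfl | hth
    · omega
    · have hg := mono_gap' hvmono k'' (k - 1) h1 (by omega) (by omega)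
      push_cast [Nat.cast_sub hk1] at hg
      omega

lemma ql_max_fwd (hvmono : ∀ i, 1 ≤ i → i + 1 ≤ n → v i < v (i + 1))
    (huv : ∀ i, 1 ≤ i → i ≤ n → u i < v i)
    {x : ↥(QL n u v)} (hmax : ∀ z : ↥(QL n u v), x ≤ z → z = x) :
    ∃ k : ℕ, 1 ≤ k ∧ k ≤ n ∧ (x : ℤ × ℤ).1 = -(k : ℤ) ∧
      (x : ℤ × ℤ).2 = v k - k ∧ thetaGt1 v k := by
  obtain ⟨k, hk1, hkn, hxa, hxl, hxr⟩ := x.2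
  have hxb : (x : ℤ × ℤ).2 = v k - k := by
    by_contra hb
    have hb' : (x : ℤ × ℤ).2 < v k - k := by omega
    set z : ↥(QL n u v) := ⟨((x : ℤ × ℤ).1, (x : ℤ × ℤ).2 + 1),
      ⟨k, hk1, hkn, hxa, by omega, by omega⟩⟩ with hz
    have hzx : x ≤ z := by
      apply Subtype.coe_le_coe.1
      rw [Prod.le_def]
      exact ⟨le_rfl, by show _ ≤ (x : ℤ × ℤ).2 + 1; omega⟩
    have := congrArg (fun w : ↥(QL n u v) => (w : ℤ × ℤ).2) (hmax z hzx)
    simp only [hz] at this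
    omega
  refine ⟨k, hk1, hkn, hxa, hxb, ?_⟩
  by_contra hth
  simp only [thetaGt1, not_or, not_lt] at hth
  obtain ⟨hne, hstep⟩ := hth
  have hk2 : 2 ≤ k := by omega
  have hv1 := hvmono (k - 1) (by omega) (by omega)
  rw [show k - 1 + 1 = k by omega] at hv1
  have huv1 := huv (k - 1) (by omega) (by omega)
  set z : ↥(QL n u v) := ⟨(-((k - 1 : ℕ) : ℤ), (x : ℤ × ℤ).2),
    ⟨k - 1, by omega, by omega, rfl,
      by show u (k-1) + 1 - ((k-1 : ℕ) : ℤ) ≤ (x : ℤ × ℤ).2; omega,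
      by show (x : ℤ × ℤ).2 ≤ v (k-1) - ((k-1 : ℕ) : ℤ); omega⟩⟩ with hz
  have hzx : x ≤ z := by
    apply Subtype.coe_le_coe.1
    rw [Prod.le_def]
    constructor
    · show _ ≤ -((k - 1 : ℕ) : ℤ); omega
    · exact le_rfl
  have := congrArg (fun w : ↥(QL n u v) => (w : ℤ × ℤ).1) (hmax z hzx)
  simp only [hz] at this
  omega

lemma exists_iota (humono : ∀ i, 1 ≤ i → i + 1 ≤ n → u i < u (i + 1)) :
    ∀ d i, 1 ≤ i → i ≤ n → n - i ≤ d →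
      ∃ i', i ≤ i' ∧ i' ≤ n ∧ epsGt1 u n i' ∧ u i' - (i' : ℤ) = u i - (i : ℤ) := by
  intro d
  induction d with
  | zero =>
    intro i h1 h2 h3
    have : i = n := by omega
    subst this
    exact ⟨i, le_rfl, le_rfl, Or.inl rfl, rfl⟩
  | succ d ih =>
    intro i h1 h2 h3
    by_cases hi : epsGt1 u n i
    · exact ⟨i, le_rfl, h2, hi, rfl⟩
    · simp only [epsGt1, not_or, not_lt] at hi
      obtain ⟨hne, hstep⟩ := hi
      have hu1 := humono i h1 (by omega)
      obtain ⟨i', g1, g2, g3, g4⟩ := ih (i + 1) (by omega) (by omega) (by omega)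
      refine ⟨i', by omega, g2, g3, ?_⟩
      push_cast at g4 ⊢
      omega

lemma exists_kappa (hvmono : ∀ i, 1 ≤ i → i + 1 ≤ n → v i < v (i + 1)) :
    ∀ k, 1 ≤ k → k ≤ n →
      ∃ k', 1 ≤ k' ∧ k' ≤ k ∧ thetaGt1 v k' ∧ v k' - (k' : ℤ) = v k - (k : ℤ) := by
  intro k
  induction k with
  | zero => intro h; omega
  | succ k ih =>
    intro h1 h2
    by_cases hk : thetaGt1 v (k + 1)
    · exact ⟨k + 1, h1, le_rfl, hk, rfl⟩
    · simp only [thetaGt1, not_or, not_lt, Nat.add_sub_cancel] at hk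
      obtain ⟨hne, hstep⟩ := hk
      have hk1 : 1 ≤ k := by omega
      have hv1 := hvmono k hk1 h2
      obtain ⟨k', g1, g2, g3, g4⟩ := ih hk1 (by omega)
      refine ⟨k', g1, by omega, g3, ?_⟩
      push_cast at g4 ⊢
      omega

end QLGeom

section Claims
variable {n : ℕ} {u v : ℕ → ℤ}

lemma claimA
    (humono : ∀ i, 1 ≤ i → i + 1 ≤ n → u i < u (i + 1))
    (hvmono : ∀ i, 1 ≤ i → i + 1 ≤ n → v i < v (i + 1))
    (huv : ∀ i, 1 ≤ i → i ≤ n → u i < v i)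
    (hcn : ∀ i, 1 ≤ i → i + 1 ≤ n → u (i + 1) ≤ v i)
    (hpair : ∀ x y x' y' : ↥(QL n u v), x ≤ y → x' ≤ y' →
      (∀ z, z ≤ x → z = x) → (∀ z, y ≤ z → z = y) →
      (∀ z, z ≤ x' → z = x') → (∀ z, y' ≤ z → z = y') →
      ((y : ℤ×ℤ).1 + (y : ℤ×ℤ).2) - ((x : ℤ×ℤ).1 + (x : ℤ×ℤ).2)
        = ((y' : ℤ×ℤ).1 + (y' : ℤ×ℤ).2) - ((x' : ℤ×ℤ).1 + (x' : ℤ×ℤ).2)) :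
    ∀ d i, 1 ≤ i → i ≤ n → n - i ≤ d → epsGt1 u n i →
      u i - 2 * (i : ℤ) = u n - 2 * (n : ℤ) := by
  intro d
  induction d with
  | zero =>
    intro i h1 h2 h3 _
    have : i = n := by omega
    subst this; rfl
  | succ d ih =>
    intro i h1 h2 h3 heps
    rcases Nat.eq_or_lt_of_le h2 with rfl | hlt
    · rfl
    obtain ⟨i'', g1, g2, g3, g4⟩ :=
      exists_iota humono (n - (i + 1)) (i + 1) (by omega) (by omega) (by omega)
    obtain ⟨k, f1, f2, f3, f4⟩ := exists_kappa hvmono i h1 h2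
    have huvi := huv i h1 h2
    have huvI := huv i'' (by omega) g2
    have huvk := huv k f1 (by omega)
    have hcni := hcn i h1 (by omega)
    set x1 : ↥(QL n u v) := ⟨(-(i : ℤ), u i + 1 - i),
      ⟨i, h1, h2, rfl, le_rfl, by omega⟩⟩ with hx1
    set x2 : ↥(QL n u v) := ⟨(-(i'' : ℤ), u i'' + 1 - i''),
      ⟨i'', by omega, g2, rfl, le_rfl, by omega⟩⟩ with hx2
    set yy : ↥(QL n u v) := ⟨(-(k : ℤ), v k - k),
      ⟨k, f1, by omega, rfl, by omega, le_rfl⟩⟩ with hyy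
    have hb1 : x1 ≤ yy := by
      apply Subtype.coe_le_coe.1
      rw [Prod.le_def]
      constructor
      · show -(i : ℤ) ≤ -(k : ℤ); omega
      · show u i + 1 - (i : ℤ) ≤ v k - (k : ℤ); omega
    have hb2 : x2 ≤ yy := by
      apply Subtype.coe_le_coe.1
      rw [Prod.le_def]
      constructor
      · show -(i'' : ℤ) ≤ -(k : ℤ); omega
      · show u i'' + 1 - (i'' : ℤ) ≤ v k - (k : ℤ); omega
    have hm1 := ql_min_bwd (x := x1) humono h1 h2 rfl rfl heps
    have hm2 := ql_min_bwd (x := x2) humono (by omega : 1 ≤ i'') g2 rfl rfl g3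
    have hM := ql_max_bwd (x := yy) hvmono f1 (by omega : k ≤ n) rfl rfl f3
    have hp := hpair x1 yy x2 yy hb1 hb2 hm1 hM hm2 hM
    have e1 : (x1 : ℤ×ℤ).1 = -(i : ℤ) := rfl
    have e2 : (x1 : ℤ×ℤ).2 = u i + 1 - i := rfl
    have e3 : (x2 : ℤ×ℤ).1 = -(i'' : ℤ) := rfl
    have e4 : (x2 : ℤ×ℤ).2 = u i'' + 1 - i'' := rfl
    have hih := ih i'' (by omega) g2 (by omega) g3
    omega

lemma claimB
    (humono : ∀ i, 1 ≤ i → i + 1 ≤ n → u i < u (i + 1))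
    (hvmono : ∀ i, 1 ≤ i → i + 1 ≤ n → v i < v (i + 1))
    (huv : ∀ i, 1 ≤ i → i ≤ n → u i < v i)
    (hcn : ∀ i, 1 ≤ i → i + 1 ≤ n → u (i + 1) ≤ v i)
    (hpair : ∀ x y x' y' : ↥(QL n u v), x ≤ y → x' ≤ y' →
      (∀ z, z ≤ x → z = x) → (∀ z, y ≤ z → z = y) →
      (∀ z, z ≤ x' → z = x') → (∀ z, y' ≤ z → z = y') →
      ((y : ℤ×ℤ).1 + (y : ℤ×ℤ).2) - ((x : ℤ×ℤ).1 + (x : ℤ×ℤ).2)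
        = ((y' : ℤ×ℤ).1 + (y' : ℤ×ℤ).2) - ((x' : ℤ×ℤ).1 + (x' : ℤ×ℤ).2)) :
    ∀ k, 1 ≤ k → k ≤ n → thetaGt1 v k →
      v k - 2 * (k : ℤ) = v 1 - 2 := by
  intro k
  induction k using Nat.strong_induction_on with
  | _ k ih =>
    intro h1 h2 hth
    rcases Nat.eq_or_lt_of_le h1 with h | hlt
    · subst h; norm_num
    obtain ⟨i'', g1, g2, g3, g4⟩ :=
      exists_iota humono (n - k) k h1 h2 (by omega)
    obtain ⟨k', f1, f2, f3, f4⟩ := exists_kappa hvmono (k - 1) (by omega) (by omega)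
    have huvk := huv k h1 h2
    have huvI := huv i'' (by omega) g2
    have huvk' := huv k' f1 (by omega)
    have hcnk := hcn (k - 1) (by omega) (by omega)
    rw [show k - 1 + 1 = k by omega] at hcnk
    set x : ↥(QL n u v) := ⟨(-(i'' : ℤ), u i'' + 1 - i''),
      ⟨i'', by omega, g2, rfl, le_rfl, by omega⟩⟩ with hx
    set y1 : ↥(QL n u v) := ⟨(-(k : ℤ), v k - k),
      ⟨k, h1, h2, rfl, by omega, le_rfl⟩⟩ with hy1
    set y2 : ↥(QL n u v) := ⟨(-(k' : ℤ), v k' - k'),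
      ⟨k', f1, by omega, rfl, by omega, le_rfl⟩⟩ with hy2
    have hb1 : x ≤ y1 := by
      apply Subtype.coe_le_coe.1
      rw [Prod.le_def]
      constructor
      · show -(i'' : ℤ) ≤ -(k : ℤ); omega
      · show u i'' + 1 - (i'' : ℤ) ≤ v k - (k : ℤ); omega
    have hb2 : x ≤ y2 := by
      apply Subtype.coe_le_coe.1
      rw [Prod.le_def]
      constructor
      · show -(i'' : ℤ) ≤ -(k' : ℤ); omega
      · show u i'' + 1 - (i'' : ℤ) ≤ v k' - (k' : ℤ); omega
    have hm := ql_min_bwd (x := x) humono (by omega : 1 ≤ i'') g2 rfl rfl g3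
    have hM1 := ql_max_bwd (x := y1) hvmono h1 h2 rfl rfl hth
    have hM2 := ql_max_bwd (x := y2) hvmono f1 (by omega : k' ≤ n) rfl rfl f3
    have hp := hpair x y1 x y2 hb1 hb2 hm hM1 hm hM2
    have e1 : (y1 : ℤ×ℤ).1 = -(k : ℤ) := rfl
    have e2 : (y1 : ℤ×ℤ).2 = v k - k := rfl
    have e3 : (y2 : ℤ×ℤ).1 = -(k' : ℤ) := rfl
    have e4 : (y2 : ℤ×ℤ).2 = v k' - k' := rfl
    have hih := ih k' (by omega) f1 (by omega) f3
    omega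

end Claims

theorem stmt12
    (n m : ℕ) (u v : ℕ → ℤ)
    (hn : 1 ≤ n) (hnm : n < m)
    (hu1 : u 1 = 1)
    (humono : ∀ i, 1 ≤ i → i + 1 ≤ n → u i < u (i + 1))
    (hum : u n < (m : ℤ))
    (hv1 : 1 < v 1)
    (hvmono : ∀ i, 1 ≤ i → i + 1 ≤ n → v i < v (i + 1))
    (hvn : v n = (m : ℤ))
    (huv : ∀ i, 1 ≤ i → i ≤ n → u i < v i)
    (hstep : ∀ i, 1 ≤ i → i + 1 ≤ n → u (i + 1) ≤ v i + 1)
    (hcn : ∀ i, 1 ≤ i → i + 1 ≤ n → u (i + 1) ≤ v i) :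
    IsPure ↥(PL n u v) ↔
      ((∀ i k : ℕ, 1 ≤ i → i ≤ k → k ≤ n → epsGt1 u n i → epsGt1 u n k →
          u k - u i = 2 * ((k : ℤ) - (i : ℤ))) ∧
       (∀ i k : ℕ, 1 ≤ i → i ≤ k → k ≤ n → thetaGt1 v i → thetaGt1 v k →
          v k - v i = 2 * ((k : ℤ) - (i : ℤ)))) := by
  classical
  have e := plIso n u v
  rw [isPure_congr e]
  haveI : Finite ↥(QL n u v) := (ql_finite humono hvmono).to_subtype
  haveI : Nonempty ↥(QL n u v) := by
    refine ⟨⟨(-(1 : ℤ), u 1), ⟨1, le_rfl, hn, by norm_num, ?_, ?_⟩⟩⟩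
    · show u 1 + 1 - ((1 : ℕ) : ℤ) ≤ u 1; push_cast; omega
    · show u 1 ≤ v 1 - ((1 : ℕ) : ℤ); have := huv 1 le_rfl hn; push_cast; omega
  set ρ : ↥(QL n u v) → ℤ := fun x => (x : ℤ×ℤ).1 + (x : ℤ×ℤ).2 with hρ
  have hmono : ∀ x y : ↥(QL n u v), x < y → ρ x < ρ y := ql_mono
  have hcov : ∀ x y : ↥(QL n u v), x < y →
      (∀ z, x < z → z < y → False) → ρ y = ρ x + 1 := ql_cov humono hvmono
  constructor
  · intro hpure
    have hpair : ∀ x y x' y' : ↥(QL n u v), x ≤ y → x' ≤ y' →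
        (∀ z, z ≤ x → z = x) → (∀ z, y ≤ z → z = y) →
        (∀ z, z ≤ x' → z = x') → (∀ z, y' ≤ z → z = y') →
        ((y : ℤ×ℤ).1 + (y : ℤ×ℤ).2) - ((x : ℤ×ℤ).1 + (x : ℤ×ℤ).2)
          = ((y' : ℤ×ℤ).1 + (y' : ℤ×ℤ).2) - ((x' : ℤ×ℤ).1 + (x' : ℤ×ℤ).2) := by
      intro x y x' y' hxy hxy' p1 p2 p3 p4
      exact pure_rank_diff ρ hmono hcov hpure hxy hxy' p1 p2 p3 p4
    constructor
    · intro i k hi hik hkn hei hek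
      have h1 := claimA humono hvmono huv hcn hpair (n - i) i hi (by omega) (by omega) hei
      have h2 := claimA humono hvmono huv hcn hpair (n - k) k (by omega) hkn (by omega) hek
      omega
    · intro i k hi hik hkn hti htk
      have h1 := claimB humono hvmono huv hcn hpair i hi (by omega) hti
      have h2 := claimB humono hvmono huv hcn hpair k (by omega) hkn htk
      omega
  · rintro ⟨ha, hb⟩
    apply pure_of_const_rank ρ hmono hcov (u n + 1 - 2 * (n : ℤ)) (v 1 - 2)
    · intro x hx
      obtain ⟨i, h1, h2, h3, h4, heps⟩ := ql_min_fwd humono huv hx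
      have := ha i n h1 h2 le_rfl heps (Or.inl rfl)
      show (x : ℤ×ℤ).1 + (x : ℤ×ℤ).2 = _
      omega
    · intro x hx
      obtain ⟨k, h1, h2, h3, h4, hth⟩ := ql_max_fwd hvmono huv hx
      have := hb 1 k le_rfl h1 h2 (Or.inl rfl) hth
      show (x : ℤ×ℤ).1 + (x : ℤ×ℤ).2 = _
      omega

end LadderPaper
end

section
/- For each s ∈ [t]: the element a_{i_s, u_{i_s}+1} is a minimal element of P_𝓛, the element a_{p_s, v_{p_s}} is a maximal element of P_𝓛, a_{i_s, u_{i_s}+1} ≤ a_{p_s, v_{p_s}}, and every saturated chain in P_𝓛 with least element a_{i_s, u_{i_s}+1} and greatest element a_{p_s, v_{p_s}} has length Δ_{p_s} + i_s − p_s − 1. -/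
namespace LadderPaper

/-- Strict monotonicity gives `w s - s ≤ w t - t`. -/
lemma mono_diff (n : ℕ) (w : ℕ → ℤ)
    (hw : ∀ i, 1 ≤ i → i + 1 ≤ n → w i < w (i + 1)) :
    ∀ s t : ℕ, 1 ≤ s → s ≤ t → t ≤ n → w s - (s : ℤ) ≤ w t - (t : ℤ) := by
  intro s t h1 hst htn
  induction t, hst using Nat.le_induction with
  | base => exact le_refl _
  | succ t hst ih =>
    have h2 : t + 1 ≤ n := htn
    have h3 := hw t (le_trans h1 hst) h2
    have h4 := ih (Nat.le_of_succ_le h2)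
    push_cast
    push_cast at h4
    linarith

/-- Key order characterization on `P_𝓛`. -/
lemma aLe_iff (n : ℕ) (u : ℕ → ℤ)
    {i i' : ℕ} {j j' : ℤ}
    (hi : 1 ≤ i) (hin : i ≤ n) (hi' : 1 ≤ i') (hin' : i' ≤ n)
    (hj : u i + 1 ≤ j) :
    atuple u n i j ≤ atuple u n i' j' ↔ (i' ≤ i ∧ j - (i : ℤ) ≤ j' - (i' : ℤ)) := by
  constructor
  · intro h
    have ht := h i
    simp only [atuple, hi, hin, and_self, if_true, lt_irrefl, if_false, sub_self,
      add_zero] at ht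
    rw [max_eq_left (by linarith)] at ht
    by_cases hii : i < i'
    · rw [if_pos hii] at ht
      linarith
    · rw [if_neg hii] at ht
      refine ⟨not_lt.1 hii, ?_⟩
      rcases le_max_iff.1 ht with h1 | h1
      · linarith
      · linarith
  · rintro ⟨hii, hk⟩ t
    simp only [atuple]
    by_cases hr : 1 ≤ t ∧ t ≤ n
    · rw [if_pos hr, if_pos hr]
      by_cases h1 : t < i'
      · rw [if_pos h1, if_pos (lt_of_lt_of_le h1 hii)]
      · rw [if_neg h1]
        by_cases h2 : t < i
        · rw [if_pos h2]
          exact le_max_right _ _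
        · rw [if_neg h2]
          refine max_le_max ?_ le_rfl
          linarith
    · rw [if_neg hr, if_neg hr]

lemma a_inj (n : ℕ) (u : ℕ → ℤ)
    {i i' : ℕ} {j j' : ℤ}
    (hi : 1 ≤ i) (hin : i ≤ n) (hi' : 1 ≤ i') (hin' : i' ≤ n)
    (hj : u i + 1 ≤ j) (hj' : u i' + 1 ≤ j')
    (h : atuple u n i j = atuple u n i' j') : i = i' ∧ j = j' := by
  have h1 := (aLe_iff n u hi hin hi' hin' hj).1 h.le
  have h2 := (aLe_iff n u hi' hin' hi hin hj').1 h.ge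
  have hii : i = i' := le_antisymm h2.1 h1.1
  refine ⟨hii, ?_⟩
  subst hii
  linarith [h1.2, h2.2]

/-- The rank function on `P_𝓛`: `ρ(a_{i,j}) = j - 2 i`. -/
noncomputable def rho (n : ℕ) (u v : ℕ → ℤ) (x : ↥(PL n u v)) : ℤ :=
  x.2.choose_spec.choose - 2 * (x.2.choose : ℤ)

lemma rho_eq (n : ℕ) (u v : ℕ → ℤ) (x : ↥(PL n u v))
    {i : ℕ} {j : ℤ} (hi : 1 ≤ i) (hin : i ≤ n) (hj : u i + 1 ≤ j)
    (hx : (x : ℕ → ℤ) = atuple u n i j) :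
    rho n u v x = j - 2 * (i : ℤ) := by
  obtain ⟨hi1, hin1, hj1, hj2, hx1⟩ := x.2.choose_spec.choose_spec
  have heq : atuple u n x.2.choose x.2.choose_spec.choose = atuple u n i j := by
    rw [← hx1, ← hx]
  obtain ⟨h1, h2⟩ := a_inj n u hi1 hin1 hi hin hj1 hj heq
  simp only [rho]
  rw [h2, h1]

lemma mem_PL (n : ℕ) (u v : ℕ → ℤ) {i : ℕ} {j : ℤ}
    (hi : 1 ≤ i) (hin : i ≤ n) (hj1 : u i + 1 ≤ j) (hj2 : j ≤ v i) :
    atuple u n i j ∈ PL n u v := ⟨i, j, hi, hin, hj1, hj2, rfl⟩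

/-- Covers in `P_𝓛` raise `ρ` by exactly `1`. -/
lemma cover_rho (n : ℕ) (u v : ℕ → ℤ)
    (humono : ∀ i, 1 ≤ i → i + 1 ≤ n → u i < u (i + 1))
    (hvmono : ∀ i, 1 ≤ i → i + 1 ≤ n → v i < v (i + 1))
    (x y : ↥(PL n u v)) (h : x ⋖ y) :
    rho n u v y = rho n u v x + 1 := by
  obtain ⟨i, j, hi1, hin, hj1, hj2, hx⟩ := x.2
  obtain ⟨i', j', hi1', hin', hj1', hj2', hy⟩ := y.2
  have hle : (x : ℕ → ℤ) ≤ (y : ℕ → ℤ) := h.1.le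
  rw [hx, hy] at hle
  obtain ⟨hii, hk⟩ := (aLe_iff n u hi1 hin hi1' hin' hj1).1 hle
  have hiiZ : (i' : ℤ) ≤ (i : ℤ) := by exact_mod_cast hii
  rw [rho_eq n u v y hi1' hin' hj1' hy, rho_eq n u v x hi1 hin hj1 hx]
  -- goal : j' - 2 i' = j - 2 i + 1
  by_contra hcon
  -- the "gap" (i - i') + ((j' - i') - (j - i)) is ≥ 0 and ≠ 1
  have hne : ¬((i : ℤ) = i' ∧ j = j') := by
    rintro ⟨e1, e2⟩
    have : i = i' := by exact_mod_cast e1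
    apply h.1.ne
    apply Subtype.ext
    rw [hx, hy, this, e2]
  -- case analysis
  by_cases ha : (i' : ℤ) < i
  · by_cases hb : j - (i : ℤ) < j' - (i' : ℤ)
    · -- intermediate z = a_{i', j - i + i'}
      set jz : ℤ := j - (i : ℤ) + (i' : ℤ) with hjz
      have hzb1 : u i' + 1 ≤ jz := by
        have := mono_diff n u humono i' i hi1' hii hin
        linarith
      have hzb2 : jz ≤ v i' := by linarith
      set z : ↥(PL n u v) := ⟨atuple u n i' jz, mem_PL n u v hi1' hin' hzb1 hzb2⟩ with hz
      have hxz : x < z := by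
        refine lt_of_le_of_ne ?_ ?_
        · show (x : ℕ → ℤ) ≤ (z : ℕ → ℤ)
          rw [hx]
          exact (aLe_iff n u hi1 hin hi1' hin' hj1).2 ⟨hii, by linarith⟩
        · intro he
          have : (x : ℕ → ℤ) = atuple u n i' jz := by rw [he]
          rw [hx] at this
          obtain ⟨e1, _⟩ := a_inj n u hi1 hin hi1' hin' hj1 hzb1 this
          omega
      have hzy : z < y := by
        refine lt_of_le_of_ne ?_ ?_
        · show (z : ℕ → ℤ) ≤ (y : ℕ → ℤ)
          rw [hy]
          exact (aLe_iff n u hi1' hin' hi1' hin' hzb1).2 ⟨le_rfl, by linarith⟩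
        · intro he
          have : atuple u n i' jz = atuple u n i' j' := by
            rw [show atuple u n i' jz = (z : ℕ → ℤ) from rfl, he, hy]
          obtain ⟨_, e2⟩ := a_inj n u hi1' hin' hi1' hin' hzb1 hj1' this
          omega
      exact h.2 hxz hzy
    · -- j - i = j' - i', so i - i' ≥ 2
      have hkk : j - (i : ℤ) = j' - (i' : ℤ) := le_antisymm hk (not_lt.1 hb)
      have hgap : (i' : ℤ) + 2 ≤ (i : ℤ) := by
        by_contra hg
        have : (i : ℤ) = i' + 1 := by omega
        apply hcon; linarith
      have hi2 : i' + 2 ≤ i := by exact_mod_cast hgap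
      -- intermediate z = a_{i-1, j-1}
      have hiz1 : 1 ≤ i - 1 := by omega
      have hizn : i - 1 ≤ n := by omega
      have hcast : ((i - 1 : ℕ) : ℤ) = (i : ℤ) - 1 := by
        have : 1 ≤ i := hi1
        push_cast [this]
        ring
      have hzb1 : u (i - 1) + 1 ≤ j - 1 := by
        have hm := mono_diff n u humono (i - 1) i hiz1 (by omega) hin
        rw [hcast] at hm
        linarith
      have hzb2 : j - 1 ≤ v (i - 1) := by
        have hm := mono_diff n v hvmono i' (i - 1) hi1' (by omega) hizn
        rw [hcast] at hm
        linarith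
      set z : ↥(PL n u v) := ⟨atuple u n (i - 1) (j - 1), mem_PL n u v hiz1 hizn hzb1 hzb2⟩
        with hz
      have hxz : x < z := by
        refine lt_of_le_of_ne ?_ ?_
        · show (x : ℕ → ℤ) ≤ (z : ℕ → ℤ)
          rw [hx]
          refine (aLe_iff n u hi1 hin hiz1 hizn hj1).2 ⟨by omega, ?_⟩
          rw [hcast]; linarith
        · intro he
          have : (x : ℕ → ℤ) = atuple u n (i - 1) (j - 1) := by rw [he]
          rw [hx] at this
          obtain ⟨e1, _⟩ := a_inj n u hi1 hin hiz1 hizn hj1 hzb1 this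
          omega
      have hzy : z < y := by
        refine lt_of_le_of_ne ?_ ?_
        · show (z : ℕ → ℤ) ≤ (y : ℕ → ℤ)
          rw [hy]
          refine (aLe_iff n u hiz1 hizn hi1' hin' hzb1).2 ⟨by omega, ?_⟩
          rw [hcast]; linarith
        · intro he
          have : atuple u n (i - 1) (j - 1) = atuple u n i' j' := by
            rw [show atuple u n (i - 1) (j - 1) = (z : ℕ → ℤ) from rfl, he, hy]
          obtain ⟨e1, _⟩ := a_inj n u hiz1 hizn hi1' hin' hzb1 hj1' this
          omega
      exact h.2 hxz hzy
  · -- i = i', so j' - j ≥ 2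
    have hieq : (i : ℤ) = i' := le_antisymm (not_lt.1 ha) hiiZ
    have hieqN : i = i' := by exact_mod_cast hieq
    have hgap : j + 2 ≤ j' := by
      rcases lt_or_ge (j + 2) j' with hg | hg
      · linarith
      · by_contra _
        rcases eq_or_lt_of_le hg with hg2 | hg2
        · apply hcon; linarith
        · have hj'1 : j' ≤ j + 1 := by omega
          rcases eq_or_lt_of_le hj'1 with e | e
          · apply hcon; linarith
          · have : j' ≤ j := by omega
            have : j = j' := by linarith [hk, hieq]
            exact hne ⟨hieq, this⟩
    -- intermediate z = a_{i, j+1}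
    have hzb1 : u i + 1 ≤ j + 1 := by linarith
    have hzb2 : j + 1 ≤ v i := by
      rw [hieqN]; linarith [hk, hieq]
    set z : ↥(PL n u v) := ⟨atuple u n i (j + 1), mem_PL n u v hi1 hin hzb1 hzb2⟩ with hz
    have hxz : x < z := by
      refine lt_of_le_of_ne ?_ ?_
      · show (x : ℕ → ℤ) ≤ (z : ℕ → ℤ)
        rw [hx]
        exact (aLe_iff n u hi1 hin hi1 hin hj1).2 ⟨le_rfl, by linarith⟩
      · intro he
        have : (x : ℕ → ℤ) = atuple u n i (j + 1) := by rw [he]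
        rw [hx] at this
        obtain ⟨_, e2⟩ := a_inj n u hi1 hin hi1 hin hj1 hzb1 this
        omega
    have hzy : z < y := by
      refine lt_of_le_of_ne ?_ ?_
      · show (z : ℕ → ℤ) ≤ (y : ℕ → ℤ)
        rw [hy]
        exact (aLe_iff n u hi1 hin hi1' hin' hzb1).2 ⟨hii, by linarith⟩
      · intro he
        have : atuple u n i (j + 1) = atuple u n i' j' := by
          rw [show atuple u n i (j + 1) = (z : ℕ → ℤ) from rfl, he, hy]
        obtain ⟨_, e2⟩ := a_inj n u hi1 hin hi1' hin' hzb1 hj1' this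
        omega
    exact h.2 hxz hzy

theorem stmt14
    (n m : ℕ) (u v : ℕ → ℤ)
    (hn : 1 ≤ n) (hnm : n < m)
    (hu1 : u 1 = 1)
    (humono : ∀ i, 1 ≤ i → i + 1 ≤ n → u i < u (i + 1))
    (hum : u n < (m : ℤ))
    (hv1 : 1 < v 1)
    (hvmono : ∀ i, 1 ≤ i → i + 1 ≤ n → v i < v (i + 1))
    (hvn : v n = (m : ℤ))
    (huv : ∀ i, 1 ≤ i → i ≤ n → u i < v i)
    (hstep : ∀ i, 1 ≤ i → i + 1 ≤ n → u (i + 1) ≤ v i + 1)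
    (p q i0 : ℕ) (hb : IsBlock n u v p q) (hbm : IsBlockMin n u p q i0) :
    atuple u n i0 (u i0 + 1) ∈ PL n u v ∧
    atuple u n p (v p) ∈ PL n u v ∧
    ∀ x y : ↥(PL n u v),
      (x : ℕ → ℤ) = atuple u n i0 (u i0 + 1) → (y : ℕ → ℤ) = atuple u n p (v p) →
      (IsMin x ∧ IsMax y ∧ x ≤ y ∧
        ∀ (N : ℕ) (f : Fin (N + 1) → ↥(PL n u v)),
          (∀ s : Fin N, f s.castSucc ⋖ f s.succ) → f 0 = x → f (Fin.last N) = y →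
          (N : ℤ) = (v p - u p) + (i0 : ℤ) - (p : ℤ) - 1) := by
  obtain ⟨hp1, hpq, hqn, hqC, hnoC, hpstart⟩ := hb
  obtain ⟨hpi, hiq, heps, hmin⟩ := hbm
  have hi01 : 1 ≤ i0 := le_trans hp1 hpi
  have hi0n : i0 ≤ n := le_trans hiq hqn
  have hpn : p ≤ n := le_trans hpq hqn
  have huvp : u p + 1 ≤ v p := by linarith [huv p hp1 hpn]
  have huvi0 : u i0 + 1 ≤ v i0 := by linarith [huv i0 hi01 hi0n]
  -- along the block below i0, u grows by exactly 1
  have ublock : ∀ t : ℕ, p ≤ t → t ≤ i0 → u t - (t : ℤ) = u p - (p : ℤ) := by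
    intro t hpt hti
    induction t, hpt using Nat.le_induction with
    | base => rfl
    | succ t hpt ih =>
      have ht1 : t < i0 := hti
      have hne := hmin t hpt ht1
      have hne' : ¬(t = n ∨ 1 < u (t + 1) - u t) := hne
      push_neg at hne'
      have htn : t + 1 ≤ n := by omega
      have := humono t (le_trans hp1 hpt) htn
      have ihe := ih (by omega)
      push_cast
      push_cast at ihe
      linarith [hne'.2]
  have ubZ : u i0 - (i0 : ℤ) = u p - (p : ℤ) := ublock i0 hpi le_rfl
  refine ⟨mem_PL n u v hi01 hi0n le_rfl huvi0, mem_PL n u v hp1 hpn huvp le_rfl, ?_⟩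
  intro x y hx hy
  have hpiZ : (p : ℤ) ≤ (i0 : ℤ) := by exact_mod_cast hpi
  constructor
  · -- IsMin x
    intro z hz
    obtain ⟨i, j, hi1, hin, hj1, hj2, hzq⟩ := z.2
    have hz' : (z : ℕ → ℤ) ≤ (x : ℕ → ℤ) := hz
    rw [hzq, hx] at hz'
    obtain ⟨hii, hk⟩ := (aLe_iff n u hi1 hin hi01 hi0n hj1).1 hz'
    have hieq : i = i0 := by
      by_contra hne
      have hlt : i0 < i := lt_of_le_of_ne hii (Ne.symm hne)
      rcases heps with he | he
      · omega
      · have hm := mono_diff n u humono (i0 + 1) i (by omega) hlt hin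
        push_cast at hm
        linarith
    rw [← Subtype.coe_le_coe, hx, hzq]
    refine (aLe_iff n u hi01 hi0n hi1 hin le_rfl).2 ⟨hieq.le, ?_⟩
    subst hieq
    linarith
  constructor
  · -- IsMax y
    intro z hz
    obtain ⟨i, j, hi1, hin, hj1, hj2, hzq⟩ := z.2
    have hz' : (y : ℕ → ℤ) ≤ (z : ℕ → ℤ) := hz
    rw [hzq, hy] at hz'
    obtain ⟨hii, hk⟩ := (aLe_iff n u hp1 hpn hi1 hin huvp).1 hz'
    have hieq : i = p := by
      by_contra hne
      have hlt : i < p := lt_of_le_of_ne hii hne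
      rcases hpstart with he | he
      · omega
      · rcases he with ⟨h1, h2, h3⟩ | he
        · have hpe : p - 1 + 1 = p := by omega
          rw [hpe] at h3
          have hm := mono_diff n v hvmono i (p - 1) hi1 (by omega) (by omega)
          have hcast : ((p - 1 : ℕ) : ℤ) = (p : ℤ) - 1 := by
            have : 1 ≤ p := hp1
            push_cast [this]; ring
          rw [hcast] at hm
          have := huv p hp1 hpn
          linarith
        · omega
    rw [← Subtype.coe_le_coe, hy, hzq]
    refine (aLe_iff n u hi1 hin hp1 hpn hj1).2 ⟨hieq.ge, ?_⟩
    subst hieq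
    linarith
  constructor
  · -- x ≤ y
    rw [← Subtype.coe_le_coe, hx, hy]
    refine (aLe_iff n u hi01 hi0n hp1 hpn le_rfl).2 ⟨hpi, ?_⟩
    linarith
  · -- chain lengths
    intro N f hcov hf0 hfN
    have key : ∀ k : ℕ, ∀ hk : k ≤ N,
        rho n u v (f ⟨k, Nat.lt_succ_of_le hk⟩) = rho n u v (f 0) + (k : ℤ) := by
      intro k
      induction k with
      | zero =>
        intro hk
        have e0 : (⟨0, Nat.lt_succ_of_le hk⟩ : Fin (N + 1)) = 0 := by
          ext; simp
        rw [e0]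
        simp
      | succ k ih =>
        intro hk
        have hkN : k < N := hk
        have hc := hcov ⟨k, hkN⟩
        have e1 : (⟨k, hkN⟩ : Fin N).castSucc
            = (⟨k, Nat.lt_succ_of_le hkN.le⟩ : Fin (N + 1)) := rfl
        have e2 : (⟨k, hkN⟩ : Fin N).succ
            = (⟨k + 1, Nat.lt_succ_of_le hk⟩ : Fin (N + 1)) := rfl
        rw [e1, e2] at hc
        have hr := cover_rho n u v humono hvmono _ _ hc
        rw [hr, ih hkN.le]
        push_cast
        ring
    have hN := key N le_rfl
    have eL : (⟨N, Nat.lt_succ_of_le le_rfl⟩ : Fin (N + 1)) = Fin.last N := rfl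
    rw [eL, hfN, hf0] at hN
    have hrx : rho n u v x = (u i0 + 1) - 2 * (i0 : ℤ) :=
      rho_eq n u v x hi01 hi0n le_rfl hx
    have hry : rho n u v y = v p - 2 * (p : ℤ) :=
      rho_eq n u v y hp1 hpn huvp hy
    rw [hrx, hry] at hN
    linarith

end LadderPaper
end
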